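/- arXiv:0803.4044 — 6 statements merged into one kernel-verified Lean document; each statement's English description precedes it below -/
import Mathlib

section
/- Let G be a countable abelian group and H a subgroup of ℤ × G × ℤ. Suppose (h_M)_{M∈S} is a sequence of integers taking infinitely many distinct values, indexed over an infinite set S, and for each M ∈ S define φ_M : ℤ × G × ℤ → ℤ × G by φ_M(a, b, c) = (a + h_M · c, b). If (1, 0) ∈ φ_M(H) for all M ∈ S, then H ∩ (ℤ × {0} × {0}) contains a nonzero element, i.e., there exists D ≠ 0 with (D, 0, 0) ∈ H. -/
theorem stmt1 {G : Type*} [AddCommGroup G] [Countable G]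
    {ι : Type*} (S : Set ι) (hS : S.Infinite) (h : ι → ℤ)
    (hvals : (Set.image h S).Infinite)
    (H : AddSubgroup (ℤ × G × ℤ))
    (hφ : ∀ M ∈ S, ∃ x ∈ H, x.1 + h M * x.2.2 = 1 ∧ x.2.1 = 0) :
    ∃ D : ℤ, D ≠ 0 ∧ ((D, 0, 0) : ℤ × G × ℤ) ∈ H := by
  obtain ⟨M₀, hM₀⟩ := hS.nonempty
  obtain ⟨x, hxH, hx1, hx2⟩ := hφ M₀ hM₀
  obtain ⟨a₀, b₀, c₀⟩ := x
  simp only at hx1 hx2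
  subst hx2
  by_cases hc₀ : c₀ = 0
  · subst hc₀
    have ha : a₀ = 1 := by simpa using hx1
    subst ha
    exact ⟨1, one_ne_zero, hxH⟩
  · obtain ⟨v, hvmem, hvnot⟩ :=
      hvals.exists_notMem_finset (Finset.Icc (h M₀ - 2) (h M₀ + 2))
    obtain ⟨M₁, hM₁S, hM₁v⟩ := hvmem
    obtain ⟨y, hyH, hy1, hy2⟩ := hφ M₁ hM₁S
    obtain ⟨a₁, b₁, c₁⟩ := y
    simp only at hy1 hy2
    subst hy2
    by_cases hc₁ : c₁ = 0
    · subst hc₁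
      have ha : a₁ = 1 := by simpa using hy1
      subst ha
      exact ⟨1, one_ne_zero, hyH⟩
    · refine ⟨c₁ * a₀ - c₀ * a₁, ?_, ?_⟩
      · -- nonzero
        intro hD
        have hv3 : 3 ≤ |h M₁ - h M₀| := by
          subst hM₁v
          simp only [Finset.mem_Icc, not_and, not_le] at hvnot
          rcases abs_cases (h M₁ - h M₀) with ⟨he, _⟩ | ⟨he, _⟩ <;> omega
        have heq : c₀ * c₁ * (h M₁ - h M₀) = c₀ - c₁ := by
          linear_combination c₀ * hy1 - c₁ * hx1 + hD
        have h1 : 1 ≤ |c₀| := Int.one_le_abs hc₀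
        have h2 : 1 ≤ |c₁| := Int.one_le_abs hc₁
        have habs : |c₀| * |c₁| * |h M₁ - h M₀| = |c₀ - c₁| := by
          rw [← abs_mul, ← abs_mul, heq]
        have hsub : |c₀ - c₁| ≤ |c₀| + |c₁| := abs_sub _ _
        have hab : (0:ℤ) ≤ |c₀| * |c₁| := by positivity
        nlinarith [mul_le_mul_of_nonneg_left hv3 hab,
          mul_nonneg (by linarith : (0:ℤ) ≤ |c₀| - 1) (by linarith : (0:ℤ) ≤ |c₁| - 1)]
      · have : ((c₁ * a₀ - c₀ * a₁, 0, 0) : ℤ × G × ℤ)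
            = c₁ • (a₀, (0 : G), c₀) - c₀ • (a₁, (0 : G), c₁) := by
          simp only [Prod.smul_mk, smul_eq_mul, smul_zero, Prod.mk_sub_mk, sub_zero,
            Prod.mk.injEq]
          ring_nf
          exact ⟨trivial, trivial, trivial⟩
        rw [this]
        exact sub_mem (zsmul_mem hxH _) (zsmul_mem hyH _)
end

section
/- Define the staircase heights h : ℕ → ℕ by h(0) = 1 and h(m+1) = h(m)·r(m) + r(m)(r(m)-1)/2, where r(m) = 2^(2^m). Then for all m, h(m) ≤ (m+1)/2 · r(m), i.e., 2·h(m) ≤ (m+1)·r(m). -/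
theorem stmt4 (r h : ℕ → ℕ)
    (hr : ∀ m, r m = 2 ^ (2 ^ m))
    (h0 : h 0 = 1)
    (hrec : ∀ m, h (m + 1) = h m * r m + r m * (r m - 1) / 2) :
    ∀ m, 2 * h m ≤ (m + 1) * r m := by
  intro m
  induction m with
  | zero => simp [h0, hr 0]
  | succ m ih =>
    have hre : 2 ∣ r m := by rw [hr m]; exact dvd_pow_self 2 (Nat.pos_of_ne_zero (by positivity)).ne'
    have hdvd : 2 ∣ r m * (r m - 1) := hre.mul_right _
    have key : 2 * (r m * (r m - 1) / 2) = r m * (r m - 1) := Nat.two_mul_div_two_of_even (even_iff_two_dvd.mpr hdvd)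
    have hsq : r (m + 1) = r m * r m := by rw [hr, hr, ← pow_add]; congr 1; omega
    calc 2 * h (m + 1) = 2 * (h m * r m) + 2 * (r m * (r m - 1) / 2) := by rw [hrec m]; ring
      _ = 2 * h m * r m + r m * (r m - 1) := by rw [key]; ring
      _ ≤ (m + 1) * r m * r m + r m * r m := by
          gcongr
          omega
      _ = (m + 1 + 1) * (r m * r m) := by ring
      _ = (m + 1 + 1) * r (m + 1) := by rw [hsq]
end

section
/- With r(m) = 2^(2^m) and h defined by h(0)=1, h(m+1) = h(m)r(m) + r(m)(r(m)-1)/2, for every d ≥ 1 the sequence h(m)^{d-1} / (∏_{i=0}^{m-1} r(i))^d tends to 0 as m → ∞; in particular its liminf is 0. -/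
private lemma prod_pow_two (m : ℕ) :
    ∏ i ∈ Finset.range m, (2:ℕ) ^ (2 ^ i) = 2 ^ (2 ^ m - 1) := by
  induction m with
  | zero => simp
  | succ m ih =>
    rw [Finset.prod_range_succ, ih, ← pow_add]
    congr 1
    have h1 : 1 ≤ 2 ^ m := Nat.one_le_two_pow
    have : 2 ^ (m + 1) = 2 * 2 ^ m := by ring
    omega

private lemma h_bound (r h : ℕ → ℕ)
    (hr : ∀ m, r m = 2 ^ (2 ^ m))
    (h0 : h 0 = 1)
    (hrec : ∀ m, h (m + 1) = h m * r m + r m * (r m - 1) / 2) :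
    ∀ m, h m ≤ (m + 1) * 2 ^ (2 ^ m - 1) := by
  intro m
  induction m with
  | zero => simp [h0]
  | succ m ih =>
    have h1 : 1 ≤ 2 ^ m := Nat.one_le_two_pow
    set a := 2 ^ m with ha
    have ha2 : 2 ^ (m + 1) = 2 * a := by rw [ha]; ring
    have hsplit : (2:ℕ) ^ a = 2 * 2 ^ (a - 1) := by
      rw [← pow_succ']
      congr 1
      omega
    have hdiv : 2 ^ a * (2 ^ a - 1) / 2 = 2 ^ (a - 1) * (2 ^ a - 1) := by
      rw [hsplit]
      rw [mul_assoc, Nat.mul_div_cancel_left _ (by norm_num)]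
    have key : 2 ^ (a - 1) * 2 ^ a = 2 ^ (2 ^ (m + 1) - 1) := by
      rw [← pow_add]
      congr 1
      omega
    rw [hrec, hr]
    calc h m * 2 ^ a + 2 ^ a * (2 ^ a - 1) / 2
        ≤ (m + 1) * 2 ^ (a - 1) * 2 ^ a + 2 ^ (a - 1) * (2 ^ a - 1) := by
          rw [hdiv]; gcongr
      _ ≤ (m + 1) * 2 ^ (a - 1) * 2 ^ a + 2 ^ (a - 1) * 2 ^ a := by
          gcongr; omega
      _ = (m + 1 + 1) * (2 ^ (a - 1) * 2 ^ a) := by ring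
      _ = (m + 1 + 1) * 2 ^ (2 ^ (m + 1) - 1) := by rw [key]

theorem stmt5 (r h : ℕ → ℕ)
    (hr : ∀ m, r m = 2 ^ (2 ^ m))
    (h0 : h 0 = 1)
    (hrec : ∀ m, h (m + 1) = h m * r m + r m * (r m - 1) / 2)
    (d : ℕ) (hd : 1 ≤ d) :
    Filter.Tendsto
      (fun m => (h m : ℝ) ^ (d - 1) / (∏ i ∈ Finset.range m, (r i : ℝ)) ^ d)
      Filter.atTop (nhds 0) ∧
    Filter.liminf
      (fun m => (h m : ℝ) ^ (d - 1) / (∏ i ∈ Finset.range m, (r i : ℝ)) ^ d)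
      Filter.atTop = 0 := by
  have hprod : ∀ m, (∏ i ∈ Finset.range m, (r i : ℝ)) = (2:ℝ) ^ (2 ^ m - 1 : ℕ) := by
    intro m
    simp only [hr]
    rw [← Nat.cast_prod, prod_pow_two]
    norm_cast
  have hb := h_bound r h hr h0 hrec
  have htend : Filter.Tendsto
      (fun m => (h m : ℝ) ^ (d - 1) / (∏ i ∈ Finset.range m, (r i : ℝ)) ^ d)
      Filter.atTop (nhds 0) := by
    refine squeeze_zero (g := fun m : ℕ => ((m:ℝ) + 1) ^ (d - 1) / 2 ^ m) ?_ ?_ ?_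
    · intro m
      positivity
    · intro m
      rw [hprod]
      set P : ℝ := (2:ℝ) ^ (2 ^ m - 1 : ℕ) with hP
      have hPpos : (0:ℝ) < P := by positivity
      have hPge : (2:ℝ) ^ m ≤ P := by
        rw [hP]
        apply pow_le_pow_right₀ (by norm_num)
        have : m < 2 ^ m := Nat.lt_two_pow_self
        omega
      have hnum : (h m : ℝ) ^ (d - 1) ≤ (((m:ℝ) + 1) * P) ^ (d - 1) := by
        apply pow_le_pow_left₀ (by positivity)
        have := hb m
        rw [hP]
        exact_mod_cast this
      have hPd : P ^ d = P ^ (d - 1) * P := by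
        rw [← pow_succ]
        congr 1
        omega
      calc (h m : ℝ) ^ (d - 1) / P ^ d
          ≤ (((m:ℝ) + 1) * P) ^ (d - 1) / P ^ d := by
            apply div_le_div_of_nonneg_right hnum (by positivity) |>.trans_eq rfl
          _ = (((m:ℝ) + 1) ^ (d - 1) * P ^ (d - 1)) / (P ^ (d - 1) * P) := by
            rw [mul_pow, hPd]
          _ = ((m:ℝ) + 1) ^ (d - 1) / P := by
            rw [mul_comm (((m:ℝ) + 1) ^ (d - 1)) _, mul_div_mul_left _ _ (by positivity)]
          _ ≤ ((m:ℝ) + 1) ^ (d - 1) / 2 ^ m := by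
            apply div_le_div_of_nonneg_left (by positivity) (by positivity) hPge
    · have base : Filter.Tendsto (fun n : ℕ => (n:ℝ) ^ (d - 1) / 2 ^ n)
          Filter.atTop (nhds 0) :=
        tendsto_pow_const_div_const_pow_of_one_lt (d - 1) (by norm_num)
      have shift : Filter.Tendsto (fun m : ℕ => ((m + 1 : ℕ):ℝ) ^ (d - 1) / 2 ^ (m + 1))
          Filter.atTop (nhds 0) :=
        base.comp (Filter.tendsto_add_atTop_nat 1)
      have := shift.const_mul (2:ℝ)
      rw [mul_zero] at this
      convert this using 2 with m
      push_cast
      rw [pow_succ]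
      field_simp
  exact ⟨htend, htend.liminf_eq⟩
end

section
/- Let (Y, ν) be a measure space, S : Y → Y an invertible measure-preserving transformation, and A ⊆ Y measurable with ν(Sⁿ(A) ∩ A) = 0 for all integers n ≠ 0. Let I ⊆ Y be a measurable set of finite measure and P ⊆ ℤ a set of integers such that the sets Sᴺ(I), N ∈ P, are pairwise disjoint. Then ν(A ∩ ⋃_{N ∈ P} Sᴺ(I)) ≤ ν(I). -/
open MeasureTheory

noncomputable def zpowIter {Y : Type*} [MeasurableSpace Y] (S : Y ≃ᵐ Y) (n : ℤ) : Y → Y :=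
  if 0 ≤ n then (S : Y → Y)^[n.toNat] else (S.symm : Y → Y)^[(-n).toNat]

lemma zpowIter_eq {Y : Type*} [MeasurableSpace Y] (S : Y ≃ᵐ Y) (n : ℤ) :
    zpowIter S n = ⇑(S.toEquiv ^ n) := by
  unfold zpowIter
  split_ifs with h
  · obtain ⟨k, rfl⟩ := Int.eq_ofNat_of_zero_le h
    simp [zpow_natCast, Equiv.Perm.coe_pow]
  · push_neg at h
    obtain ⟨k, rfl⟩ := Int.exists_eq_neg_ofNat (le_of_lt h)
    rw [zpow_neg, zpow_natCast, ← inv_pow]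
    simp [Equiv.Perm.coe_pow]
    rfl

lemma zpowIter_measurable {Y : Type*} [MeasurableSpace Y] (S : Y ≃ᵐ Y) (n : ℤ) :
    Measurable (zpowIter S n) := by
  unfold zpowIter
  split_ifs with h
  · exact S.measurable.iterate _
  · exact S.symm.measurable.iterate _

noncomputable def zpowEquiv {Y : Type*} [MeasurableSpace Y] (S : Y ≃ᵐ Y) (n : ℤ) :
    Y ≃ᵐ Y where
  toEquiv := S.toEquiv ^ n
  measurable_toFun := by
    show Measurable ⇑(S.toEquiv ^ n); rw [← zpowIter_eq]; exact zpowIter_measurable S n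
  measurable_invFun := by
    show Measurable ⇑(S.toEquiv ^ n).symm
    have : (S.toEquiv ^ n).symm = S.toEquiv ^ (-n) := by
      rw [← Equiv.Perm.inv_def, ← zpow_neg]
    rw [this, ← zpowIter_eq]; exact zpowIter_measurable S (-n)

lemma zpowEquiv_coe {Y : Type*} [MeasurableSpace Y] (S : Y ≃ᵐ Y) (n : ℤ) :
    ⇑(zpowEquiv S n) = zpowIter S n := (zpowIter_eq S n).symm

lemma zpowIter_mp {Y : Type*} [MeasurableSpace Y] {ν : Measure Y} {S : Y ≃ᵐ Y}
    (hS : MeasurePreserving S ν ν) (n : ℤ) : MeasurePreserving (zpowIter S n) ν ν := by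
  unfold zpowIter
  split_ifs with h
  · exact hS.iterate _
  · exact (hS.symm S).iterate _

lemma zpowIter_image_image {Y : Type*} [MeasurableSpace Y] (S : Y ≃ᵐ Y) (m n : ℤ)
    (X : Set Y) : zpowIter S m '' (zpowIter S n '' X) = zpowIter S (m + n) '' X := by
  simp only [zpowIter_eq, ← Set.image_comp, ← Equiv.Perm.coe_mul, ← zpow_add]

lemma zpowIter_zero {Y : Type*} [MeasurableSpace Y] (S : Y ≃ᵐ Y) :
    zpowIter S 0 = id := by rw [zpowIter_eq]; simp

lemma zpowIter_measurableSet {Y : Type*} [MeasurableSpace Y] (S : Y ≃ᵐ Y) (n : ℤ)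
    {X : Set Y} (hX : MeasurableSet X) : MeasurableSet (zpowIter S n '' X) := by
  rw [← zpowEquiv_coe]
  exact (MeasurableEquiv.measurableSet_image _).2 hX

lemma zpowIter_measure_image {Y : Type*} [MeasurableSpace Y] {ν : Measure Y} {S : Y ≃ᵐ Y}
    (hS : MeasurePreserving S ν ν) (n : ℤ) (X : Set Y) :
    ν (zpowIter S n '' X) = ν X := by
  rw [← zpowEquiv_coe, MeasurableEquiv.image_eq_preimage_symm]
  have h : MeasurePreserving (zpowEquiv S n) ν ν := by
    rw [show (⇑(zpowEquiv S n) : Y → Y) = zpowIter S n from zpowEquiv_coe S n]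
    exact zpowIter_mp hS n
  exact (h.symm _).measure_preimage_equiv X

lemma zpowIter_inj {Y : Type*} [MeasurableSpace Y] (S : Y ≃ᵐ Y) (n : ℤ) :
    Function.Injective (zpowIter S n) := by
  rw [zpowIter_eq]; exact (S.toEquiv ^ n).injective

theorem stmt7 {Y : Type*} [MeasurableSpace Y] (ν : Measure Y)
    (S : Y ≃ᵐ Y) (hS : MeasurePreserving S ν ν)
    (A I : Set Y) (hA : MeasurableSet A) (hI : MeasurableSet I) (hIfin : ν I < ⊤)
    (P : Set ℤ)
    (hwand : ∀ n : ℤ, n ≠ 0 → ν (zpowIter S n '' A ∩ A) = 0)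
    (hdisj : P.PairwiseDisjoint (fun N => zpowIter S N '' I)) :
    ν (A ∩ ⋃ N ∈ P, zpowIter S N '' I) ≤ ν I := by
  classical
  -- the transported pieces inside I
  set f : ℤ → Set Y := fun N => zpowIter S (-N) '' (A ∩ zpowIter S N '' I) with hf
  have hfsub : ∀ N : ℤ, f N ⊆ I := by
    intro N
    calc f N ⊆ zpowIter S (-N) '' (zpowIter S N '' I) :=
          Set.image_mono Set.inter_subset_right
    _ = I := by rw [zpowIter_image_image, neg_add_cancel, zpowIter_zero, Set.image_id]
  have hmeasb : ∀ N : ℤ, NullMeasurableSet (f N) ν := by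
    intro N
    exact (zpowIter_measurableSet S (-N)
      (hA.inter (zpowIter_measurableSet S N hI))).nullMeasurableSet
  have hν : ∀ N : ℤ, ν (f N) = ν (A ∩ zpowIter S N '' I) := fun N =>
    zpowIter_measure_image hS (-N) _
  have hae : ∀ N M : ℤ, N ≠ M → ν (f N ∩ f M) = 0 := by
    intro N M hNM
    have hsub : f N ∩ f M ⊆ zpowIter S (-N) '' A ∩ zpowIter S (-M) '' A :=
      Set.inter_subset_inter (Set.image_mono Set.inter_subset_left)
        (Set.image_mono Set.inter_subset_left)
    have key : ν (zpowIter S (-N) '' A ∩ zpowIter S (-M) '' A) = 0 := by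
      have := zpowIter_measure_image hS M (zpowIter S (-N) '' A ∩ zpowIter S (-M) '' A)
      rw [← this, Set.image_inter (zpowIter_inj S M), zpowIter_image_image,
        zpowIter_image_image, add_neg_cancel, zpowIter_zero, Set.image_id]
      exact hwand (M + -N) (by omega)
    exact le_antisymm (le_trans (measure_mono hsub) key.le) zero_le
  -- main chain
  rw [Set.inter_iUnion₂]
  have hcount : P.Countable := Set.to_countable P
  calc ν (⋃ N ∈ P, A ∩ zpowIter S N '' I)
      ≤ ∑' N : P, ν (A ∩ zpowIter S (N : ℤ) '' I) := measure_biUnion_le ν hcount _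
    _ = ∑' N : P, ν (f N) := by simp_rw [hν]
    _ = ν (⋃ N : P, f N) := by
        refine (measure_iUnion₀ (f := fun N : P => f ↑N) ?_ fun N => hmeasb ↑N).symm
        intro N M hNM
        exact hae ↑N ↑M (Subtype.coe_injective.ne hNM)
    _ ≤ ν I := measure_mono (Set.iUnion_subset fun N => hfsub N)
end

section
/- Let (X, μ) be a measure space in which every set of infinite measure has a subset of finite positive measure, and let T be a measure-preserving transformation. Suppose 𝒞 is a sufficient class, meaning for every measurable A, μ(A) = inf{ Σ_j μ(I_j) : (I_j) a countable cover of A by members of 𝒞 }. If T is recurrent on 𝒞 (i.e., for every I ∈ 𝒞 of positive measure, μ(I \ ⋃_{i≥1} T^{-i}I) = 0), then T is conservative: there is no measurable set A of positive measure with μ(A ∩ T^{-n}A) = 0 for all n ≥ 1. -/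
open MeasureTheory
open Set

private theorem aux_key {X : Type*} [MeasurableSpace X] (μ : Measure X)
    (T : X → X) (hT : MeasurePreserving T μ μ)
    (I A : Set X) (hIm : MeasurableSet I) (hAm : MeasurableSet A)
    (hAI : A ⊆ I)
    (hrecI : μ (I \ ⋃ (i : ℕ) (_ : 1 ≤ i), T^[i] ⁻¹' I) = 0)
    (hAw : ∀ n : ℕ, 1 ≤ n → μ (A ∩ T^[n] ⁻¹' A) = 0) :
    μ A ≤ μ (I \ A) := by
  classical
  have hTm : Measurable T := hT.measurable
  set S : Set X := I \ A with hS
  have hSm : MeasurableSet S := hIm.diff hAm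
  -- first-entry decomposition sets
  set G : Set X → ℕ → Set X :=
    fun R m => T^[m + 1] ⁻¹' R ∩ ⋂ k ∈ Finset.range m, (T^[k + 1] ⁻¹' I)ᶜ with hG
  have hGm : ∀ (R : Set X), MeasurableSet R → ∀ m, MeasurableSet (G R m) := by
    intro R hR m
    exact (hR.preimage (hTm.iterate (m + 1))).inter
      (MeasurableSet.biInter (Finset.range m).countable_toSet
        (fun k _ => (hIm.preimage (hTm.iterate (k + 1))).compl))
  -- the key recursion
  have hrecur : ∀ m, μ (G S m) = μ (G S m ∩ I) + μ (G S (m + 1)) := by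
    intro m
    have hsplit : T ⁻¹' (G S m) = T ⁻¹' (G S m ∩ I) ∪ G S (m + 1) := by
      ext x
      simp only [hG, mem_preimage, mem_inter_iff, mem_union, mem_iInter,
        Finset.mem_range, mem_compl_iff]
      constructor
      · rintro ⟨h1, h2⟩
        by_cases hxI : T x ∈ I
        · left
          exact ⟨⟨h1, h2⟩, hxI⟩
        · right
          refine ⟨by rw [Function.iterate_succ_apply]; exact h1, ?_⟩
          intro k hk
          rcases Nat.eq_zero_or_pos k with hk0 | hkpos
          · subst hk0; simpa using hxI
          · obtain ⟨j, rfl⟩ := Nat.exists_eq_add_of_lt hkpos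
            rw [Function.iterate_succ_apply]
            simpa using h2 (j) (by omega)
      · rintro (⟨⟨h1, h2⟩, _⟩ | ⟨h1, h2⟩)
        · exact ⟨h1, h2⟩
        · constructor
          · rw [Function.iterate_succ_apply] at h1; exact h1
          · intro k hk
            have := h2 (k + 1) (by omega)
            rw [Function.iterate_succ_apply] at this
            exact this
    have hdisj : Disjoint (T ⁻¹' (G S m ∩ I)) (G S (m + 1)) := by
      apply Set.disjoint_left.2
      intro x hx1 hx2
      have hxI : T x ∈ I := hx1.2
      have : x ∈ (T^[0 + 1] ⁻¹' I)ᶜ := by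
        have := hx2.2
        simp only [mem_iInter, Finset.mem_range] at this
        exact this 0 (by omega)
      simp at this
      exact this hxI
    calc μ (G S m) = μ (T ⁻¹' (G S m)) :=
          (hT.measure_preimage ((hGm S hSm m).nullMeasurableSet)).symm
      _ = μ (T ⁻¹' (G S m ∩ I) ∪ G S (m + 1)) := by rw [hsplit]
      _ = μ (T ⁻¹' (G S m ∩ I)) + μ (G S (m + 1)) :=
          measure_union hdisj (hGm S hSm (m + 1))
      _ = μ (G S m ∩ I) + μ (G S (m + 1)) := by
          rw [hT.measure_preimage (((hGm S hSm m).inter hIm).nullMeasurableSet)]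
  -- telescoping
  have htele : ∀ N, ∑ m ∈ Finset.range N, μ (G S m ∩ I) + μ (G S N) = μ (G S 0) := by
    intro N
    induction N with
    | zero => simp
    | succ n ih =>
      rw [Finset.sum_range_succ, add_assoc, ← hrecur n, ih]
  have hG0 : μ (G S 0) = μ S := by
    have : G S 0 = T ⁻¹' S := by
      simp [hG]
    rw [this, hT.measure_preimage hSm.nullMeasurableSet]
  have hsumle : ∑' m, μ (G S m ∩ I) ≤ μ S := by
    apply ENNReal.tsum_le_of_sum_range_le
    intro n
    rw [← hG0, ← htele n]
    exact le_add_right le_rfl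
  -- covering A by first-entry sets
  have hcover : A ⊆ (I \ ⋃ (i : ℕ) (_ : 1 ≤ i), T^[i] ⁻¹' I) ∪ ⋃ m, (A ∩ G I m) := by
    intro x hx
    by_cases hex : ∃ n, 1 ≤ n ∧ T^[n] x ∈ I
    · right
      have hfind := Nat.find_spec hex
      set n := Nat.find hex with hn
      refine mem_iUnion.2 ⟨n - 1, hx, ?_, ?_⟩
      · have : n - 1 + 1 = n := by omega
        rw [this]
        exact hfind.2
      · simp only [mem_iInter, Finset.mem_range, mem_compl_iff, mem_preimage]
        intro k hk hkI
        exact Nat.find_min hex (by omega) ⟨by omega, hkI⟩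
    · left
      push_neg at hex
      refine ⟨hAI hx, ?_⟩
      simp only [mem_iUnion, not_exists]
      intro i hi
      exact hex i hi
  -- each first-entry piece of A is (mod null) inside G S m ∩ I
  have hpiece : ∀ m, μ (A ∩ G I m) ≤ μ (G S m ∩ I) := by
    intro m
    have hsub : A ∩ G I m ⊆ (A ∩ T^[m + 1] ⁻¹' A) ∪ (G S m ∩ I) := by
      intro x ⟨hxA, hxG⟩
      by_cases hA' : T^[m + 1] x ∈ A
      · exact Or.inl ⟨hxA, hA'⟩
      · exact Or.inr ⟨⟨⟨hxG.1, hA'⟩, hxG.2⟩, hAI hxA⟩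
    calc μ (A ∩ G I m) ≤ μ ((A ∩ T^[m + 1] ⁻¹' A) ∪ (G S m ∩ I)) := measure_mono hsub
      _ ≤ μ (A ∩ T^[m + 1] ⁻¹' A) + μ (G S m ∩ I) := measure_union_le _ _
      _ = μ (G S m ∩ I) := by rw [hAw (m + 1) (by omega), zero_add]
  calc μ A ≤ μ ((I \ ⋃ (i : ℕ) (_ : 1 ≤ i), T^[i] ⁻¹' I) ∪ ⋃ m, (A ∩ G I m)) :=
        measure_mono hcover
    _ ≤ μ (I \ ⋃ (i : ℕ) (_ : 1 ≤ i), T^[i] ⁻¹' I) + μ (⋃ m, (A ∩ G I m)) :=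
        measure_union_le _ _
    _ = μ (⋃ m, (A ∩ G I m)) := by rw [hrecI, zero_add]
    _ ≤ ∑' m, μ (A ∩ G I m) := measure_iUnion_le _
    _ ≤ ∑' m, μ (G S m ∩ I) := ENNReal.tsum_le_tsum hpiece
    _ ≤ μ S := hsumle

theorem stmt8 {X : Type*} [MeasurableSpace X] (μ : Measure X)
    (hfin : ∀ A : Set X, MeasurableSet A → μ A = ⊤ →
      ∃ B ⊆ A, MeasurableSet B ∧ 0 < μ B ∧ μ B < ⊤)
    (T : X → X) (hT : MeasurePreserving T μ μ)
    (𝒞 : Set (Set X)) (h𝒞meas : ∀ I ∈ 𝒞, MeasurableSet I)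
    (hsuff : ∀ A : Set X, MeasurableSet A →
      μ A = ⨅ (I : ℕ → Set X) (_ : ∀ j, I j ∈ 𝒞) (_ : A ⊆ ⋃ j, I j), ∑' j, μ (I j))
    (hrec : ∀ I ∈ 𝒞, 0 < μ I →
      μ (I \ ⋃ (i : ℕ) (_ : 1 ≤ i), T^[i] ⁻¹' I) = 0) :
    ¬ ∃ A : Set X, MeasurableSet A ∧ 0 < μ A ∧
      ∀ n : ℕ, 1 ≤ n → μ (A ∩ T^[n] ⁻¹' A) = 0 := by
  rintro ⟨W₀, hW₀m, hW₀pos, hW₀w⟩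
  obtain ⟨W, hWm, hWpos, hWfin, hWw⟩ :
      ∃ W : Set X, MeasurableSet W ∧ 0 < μ W ∧ μ W < ⊤ ∧
        ∀ n : ℕ, 1 ≤ n → μ (W ∩ T^[n] ⁻¹' W) = 0 := by
    by_cases h : μ W₀ = ⊤
    · obtain ⟨B, hBsub, hBm, hBpos, hBfin⟩ := hfin W₀ hW₀m h
      exact ⟨B, hBm, hBpos, hBfin, fun n hn => measure_mono_null
        (Set.inter_subset_inter hBsub (Set.preimage_mono hBsub)) (hW₀w n hn)⟩
    · exact ⟨W₀, hW₀m, hW₀pos, lt_top_iff_ne_top.2 h, hW₀w⟩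
  -- get a cover with total measure < 2 μ W
  have hlt : (⨅ (I : ℕ → Set X) (_ : ∀ j, I j ∈ 𝒞) (_ : W ⊆ ⋃ j, I j), ∑' j, μ (I j))
      < 2 * μ W := by
    rw [← hsuff W hWm]
    have : μ W < μ W + μ W := ENNReal.lt_add_right hWfin.ne hWpos.ne'
    rwa [← two_mul] at this
  simp only [iInf_lt_iff] at hlt
  obtain ⟨Icov, hmem, hcov, hIlt⟩ := hlt
  -- find a member mostly filled by W
  have hj : ∃ j, μ (Icov j) < 2 * μ (W ∩ Icov j) := by
    by_contra hc
    push_neg at hc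
    have h1 : μ W ≤ ∑' j, μ (W ∩ Icov j) := by
      calc μ W = μ (W ∩ ⋃ j, Icov j) := by
            rw [Set.inter_eq_self_of_subset_left hcov]
        _ = μ (⋃ j, W ∩ Icov j) := by rw [Set.inter_iUnion]
        _ ≤ ∑' j, μ (W ∩ Icov j) := measure_iUnion_le _
    have h2 : 2 * μ W ≤ ∑' j, μ (Icov j) := by
      calc 2 * μ W ≤ 2 * ∑' j, μ (W ∩ Icov j) := by
            exact mul_le_mul_right h1 2
        _ = ∑' j, 2 * μ (W ∩ Icov j) := ENNReal.tsum_mul_left.symm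
        _ ≤ ∑' j, μ (Icov j) := ENNReal.tsum_le_tsum hc
    exact absurd (h2.trans_lt hIlt) (lt_irrefl _)
  obtain ⟨j, hjlt⟩ := hj
  set I : Set X := Icov j with hIdef
  set A : Set X := W ∩ I with hAdef
  have hIm : MeasurableSet I := h𝒞meas _ (hmem j)
  have hAm : MeasurableSet A := hWm.inter hIm
  have hAI : A ⊆ I := Set.inter_subset_right
  have hApos : 0 < μ A := by
    rcases eq_or_ne (μ A) 0 with h0 | h0
    · rw [h0, mul_zero] at hjlt
      exact absurd hjlt (not_lt.2 zero_le)
    · exact pos_iff_ne_zero.2 h0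
  have hIpos : 0 < μ I := hApos.trans_le (measure_mono hAI)
  have hAw : ∀ n : ℕ, 1 ≤ n → μ (A ∩ T^[n] ⁻¹' A) = 0 := fun n hn =>
    measure_mono_null (Set.inter_subset_inter Set.inter_subset_left
      (Set.preimage_mono Set.inter_subset_left)) (hWw n hn)
  have hkey : μ A ≤ μ (I \ A) :=
    aux_key μ T hT I A hIm hAm hAI (hrec _ (hmem j) hIpos) hAw
  have hsum : μ A + μ (I \ A) = μ I := by
    have := measure_inter_add_diff (μ := μ) I hAm
    rwa [Set.inter_eq_self_of_subset_right hAI] at this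
  have : 2 * μ A ≤ μ I := by
    rw [two_mul, ← hsum]
    exact add_le_add_right hkey _
  exact absurd (this.trans_lt hjlt) (lt_irrefl _)
end

section
/- Let (X, μ) be a measure space, T measure-preserving, A a measurable set such that μ(A ∩ T^{-n}A) = 0 for all n ≥ 1, and I a measurable set of positive finite measure with μ(A ∩ I) > (1/2)·μ(I). Then μ(I \ ⋃_{n≥1} T^{-n}(I)) > 0; in particular almost-sure return to I fails. -/
open MeasureTheory

theorem stmt9 {X : Type*} [MeasurableSpace X] (μ : Measure X)
    (T : X → X) (hT : MeasurePreserving T μ μ)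
    (A I : Set X) (hA : MeasurableSet A) (hI : MeasurableSet I)
    (hwand : ∀ n : ℕ, 1 ≤ n → μ (A ∩ T^[n] ⁻¹' A) = 0)
    (hIpos : 0 < μ I) (hIfin : μ I < ⊤)
    (hfull : μ I / 2 < μ (A ∩ I)) :
    0 < μ (I \ ⋃ (n : ℕ) (_ : 1 ≤ n), T^[n] ⁻¹' I) := by
  classical
  set U : Set X := ⋃ (n : ℕ) (_ : 1 ≤ n), T^[n] ⁻¹' I with hU
  have hTm : ∀ n : ℕ, MeasurePreserving (T^[n]) μ μ := fun n => hT.iterate n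
  have hTmeas : ∀ n : ℕ, Measurable (T^[n]) := fun n => hT.measurable.iterate n
  set C : Set X := I \ A with hC
  have hCmeas : MeasurableSet C := hI.diff hA
  set E : ℕ → Set X := fun j => (A ∩ I) ∩ T^[j+1] ⁻¹' I with hE
  have hEmeas : ∀ j, MeasurableSet (E j) := fun j =>
    (hA.inter hI).inter (hI.preimage (hTmeas (j+1)))
  -- null sets from wandering
  have hnull : ∀ (s k : ℕ), 1 ≤ k → μ (T^[s] ⁻¹' (A ∩ T^[k] ⁻¹' A)) = 0 := by
    intro s k hk
    rw [(hTm s).measure_preimage (hA.inter (hA.preimage (hTmeas k))).nullMeasurableSet]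
    exact hwand k hk
  -- key estimate
  have key : ∀ m : ℕ, ∑ j ∈ Finset.range m, μ (E j) ≤ μ C := by
    intro m
    set Q : ℕ → Set X := fun j => T^[m - (j+1)] ⁻¹' (E j) with hQ
    have hQmeas : ∀ j, MeasurableSet (Q j) := fun j => (hEmeas j).preimage (hTmeas _)
    have hiter : ∀ j, j < m → ∀ x, T^[j+1] (T^[m - (j+1)] x) = T^[m] x := by
      intro j hj x
      rw [← Function.iterate_add_apply]
      congr 1
      omega
    have hdisj : (↑(Finset.range m) : Set ℕ).Pairwise (Function.onFun (AEDisjoint μ) Q) := by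
      have main : ∀ i j, i ∈ Finset.range m → j ∈ Finset.range m → i < j →
          AEDisjoint μ (Q i) (Q j) := by
        intro i j hi hj hij
        simp only [Finset.mem_range] at hi hj
        have hsub : Q i ∩ Q j ⊆ T^[m - (j+1)] ⁻¹' (A ∩ T^[j-i] ⁻¹' A) := by
          rintro x ⟨hxi, hxj⟩
          have h1 : T^[m - (i+1)] x ∈ A := hxi.1.1
          have h2 : T^[m - (j+1)] x ∈ A := hxj.1.1
          refine ⟨h2, ?_⟩
          show T^[j-i] (T^[m - (j+1)] x) ∈ A
          rw [← Function.iterate_add_apply]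
          have : j - i + (m - (j+1)) = m - (i+1) := by omega
          rw [this]
          exact h1
        exact measure_mono_null hsub (hnull _ _ (by omega))
      intro i hi j hj hij
      rcases lt_or_gt_of_ne hij with h | h
      · exact main i j hi hj h
      · exact (main j i hj hi h).symm
    have hcover : μ (⋃ j ∈ Finset.range m, Q j) ≤ μ C := by
      have hsub : (⋃ j ∈ Finset.range m, Q j) ⊆
          (T^[m] ⁻¹' C) ∪ ⋃ j ∈ Finset.range m, T^[m - (j+1)] ⁻¹' (A ∩ T^[j+1] ⁻¹' A) := by
        intro x hx
        simp only [Set.mem_iUnion, Finset.mem_range] at hx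
        obtain ⟨j, hj, hxj⟩ := hx
        have hAj : T^[m - (j+1)] x ∈ A := hxj.1.1
        have hIm : T^[m] x ∈ I := by
          have := hxj.2
          rwa [Set.mem_preimage, hiter j hj x] at this
        by_cases hAm : T^[m] x ∈ A
        · right
          simp only [Set.mem_iUnion, Finset.mem_range]
          refine ⟨j, hj, hAj, ?_⟩
          show T^[j+1] (T^[m - (j+1)] x) ∈ A
          rwa [hiter j hj x]
        · left
          exact ⟨hIm, hAm⟩
      calc μ (⋃ j ∈ Finset.range m, Q j)
          ≤ μ ((T^[m] ⁻¹' C) ∪ ⋃ j ∈ Finset.range m, T^[m - (j+1)] ⁻¹' (A ∩ T^[j+1] ⁻¹' A)) :=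
            measure_mono hsub
        _ ≤ μ (T^[m] ⁻¹' C) + μ (⋃ j ∈ Finset.range m, T^[m - (j+1)] ⁻¹' (A ∩ T^[j+1] ⁻¹' A)) :=
            measure_union_le _ _
        _ = μ C + 0 := by
            rw [(hTm m).measure_preimage hCmeas.nullMeasurableSet]
            congr 1
            refine measure_biUnion_null_iff (Finset.range m).countable_toSet |>.2 ?_
            intro j _
            exact hnull _ _ (by omega)
        _ = μ C := add_zero _
    calc ∑ j ∈ Finset.range m, μ (E j) = ∑ j ∈ Finset.range m, μ (Q j) := by
          refine Finset.sum_congr rfl fun j hj => ?_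
          exact ((hTm (m - (j+1))).measure_preimage (hEmeas j).nullMeasurableSet).symm
      _ = μ (⋃ j ∈ Finset.range m, Q j) :=
          (measure_biUnion_finset₀ hdisj fun j _ => (hQmeas j).nullMeasurableSet).symm
      _ ≤ μ C := hcover
  -- bound on returning part of A ∩ I
  have hBU : μ ((A ∩ I) ∩ U) ≤ μ C := by
    have hsub : (A ∩ I) ∩ U ⊆ ⋃ j, E j := by
      rintro x ⟨hxB, hxU⟩
      simp only [hU, Set.mem_iUnion] at hxU
      obtain ⟨n, hn1, hxn⟩ := hxU
      refine Set.mem_iUnion.2 ⟨n - 1, hxB, ?_⟩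
      show T^[n - 1 + 1] x ∈ I
      rwa [Nat.sub_add_cancel hn1]
    calc μ ((A ∩ I) ∩ U) ≤ μ (⋃ j, E j) := measure_mono hsub
      _ ≤ ∑' j, μ (E j) := measure_iUnion_le _
      _ ≤ μ C := by
          rw [ENNReal.tsum_eq_iSup_sum]
          refine iSup_le fun s => ?_
          obtain ⟨n, hn⟩ := s.exists_nat_subset_range
          exact le_trans (Finset.sum_le_sum_of_subset hn) (key n)
  -- bound on returning part of I
  have hIU : μ (I ∩ U) ≤ μ C + μ C := by
    have hsub : I ∩ U ⊆ (C ∩ U) ∪ ((A ∩ I) ∩ U) := by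
      rintro x ⟨hxI, hxU⟩
      by_cases hxA : x ∈ A
      · exact Or.inr ⟨⟨hxA, hxI⟩, hxU⟩
      · exact Or.inl ⟨⟨hxI, hxA⟩, hxU⟩
    calc μ (I ∩ U) ≤ μ ((C ∩ U) ∪ ((A ∩ I) ∩ U)) := measure_mono hsub
      _ ≤ μ (C ∩ U) + μ ((A ∩ I) ∩ U) := measure_union_le _ _
      _ ≤ μ C + μ C := add_le_add (measure_mono Set.inter_subset_left) hBU
  -- arithmetic
  have hCfin : μ C ≠ ⊤ := (lt_of_le_of_lt (measure_mono Set.diff_subset) hIfin).ne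
  have hsum : μ (A ∩ I) + μ C = μ I := by
    rw [hC, Set.inter_comm A I]
    exact measure_inter_add_diff I hA
  have hChalf : μ C ≤ μ I / 2 := by
    by_contra h
    push_neg at h
    have : μ I < μ I := by
      calc μ I = μ (A ∩ I) + μ C := hsum.symm
        _ > μ I / 2 + μ I / 2 := ENNReal.add_lt_add hfull h
        _ = μ I := ENNReal.add_halves _
    exact absurd this (lt_irrefl _)
  have hCs : μ C < μ (A ∩ I) := lt_of_le_of_lt hChalf hfull
  have h2C : μ C + μ C < μ I := by
    calc μ C + μ C < μ (A ∩ I) + μ C := by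
          exact ENNReal.add_lt_add_right hCfin hCs
      _ = μ I := hsum
  -- conclusion
  by_contra h
  push_neg at h
  have h0 : μ (I \ U) = 0 := le_antisymm h zero_le
  have hfin : μ I ≤ μ (I ∩ U) := by
    calc μ I ≤ μ ((I \ U) ∪ (I ∩ U)) := by
          refine measure_mono fun x hx => ?_
          by_cases hxU : x ∈ U
          · exact Or.inr ⟨hx, hxU⟩
          · exact Or.inl ⟨hx, hxU⟩
      _ ≤ μ (I \ U) + μ (I ∩ U) := measure_union_le _ _
      _ = μ (I ∩ U) := by rw [h0, zero_add]
  exact absurd (lt_of_le_of_lt (hfin.trans hIU) h2C) (lt_irrefl _)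
end
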